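/- Let N = 2n+1 with n ≥ 1, and let t_j = π(2j−1)/N. Let A_{0,0} and A_{0,k}, B_{0,k}, A_{1,k}, B_{1,k}, A_{2,k}, B_{2,k} (k = 1,…,n) be arbitrary real numbers. Define T(t) = A_{0,0}/2 + Σ_{k=1}^{n} [ a_k cos(kt) + a_{N−k} cos((N−k)t) + a_{N+k} cos((N+k)t) + b_k sin(kt) + b_{N−k} sin((N−k)t) + b_{N+k} sin((N+k)t) ] with a_k = [A_{0,k}(N²−k²) − 2kB_{1,k} + A_{2,k}]/N², b_k = [B_{0,k}(N²−k²) + 2kA_{1,k} + B_{2,k}]/N², a_{N−k} = [−A_{0,k}(kN+k²) − B_{1,k}(N+2k) + A_{2,k}]/(2N²), b_{N−k} = [B_{0,k}(kN+k²) − A_{1,k}(N+2k) − B_{2,k}]/(2N²), a_{N+k} = [A_{0,k}(kN−k²) + B_{1,k}(N−2k) + A_{2,k}]/(2N²), b_{N+k} = [B_{0,k}(kN−k²) − A_{1,k}(N−2k) + B_{2,k}]/(2N²). Then for every integer j: T(t_j) = A_{0,0}/2 + Σ_{k=1}^{n} [A_{0,k} cos(k t_j) + B_{0,k} sin(k t_j)],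 T′(t_j) = Σ_{k=1}^{n} [A_{1,k} cos(k t_j) + B_{1,k} sin(k t_j)], and T″(t_j) = Σ_{k=1}^{n} [A_{2,k} cos(k t_j) + B_{2,k} sin(k t_j)]. -/

import Mathlib

open Real Finset

private lemma hdc' (c a t : ℝ) :
    HasDerivAt (fun t => a * Real.cos (c * t)) (-(a * c) * Real.sin (c * t)) t := by
  have h := (((hasDerivAt_id t).const_mul c).cos).const_mul a
  refine h.congr_deriv ?_
  simp; ring

private lemma hds' (c a t : ℝ) :
    HasDerivAt (fun t => a * Real.sin (c * t)) ((a * c) * Real.cos (c * t)) t := by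
  have h := (((hasDerivAt_id t).const_mul c).sin).const_mul a
  refine h.congr_deriv ?_
  simp; ring


/-- Formula (8) with `I = 1`: the Hermite trigonometric polynomial `T` built
from the coefficients `A₀ₖ, B₀ₖ`, `A₁ₖ, B₁ₖ`, `A₂ₖ, B₂ₖ` matches, at the nodes
`t_j = π(2j-1)/N` of the grid `Δ_N^{(1)}`, the values of the trigonometric
polynomials interpolating `f`, `f'` and `f''`. -/
theorem hermite_formula8_grid1 (n : ℕ) (hn : 1 ≤ n) (N : ℕ) (hN : N = 2 * n + 1)
    (A₀ B₀ A₁ B₁ A₂ B₂ : ℕ → ℝ) (a b : ℕ → ℝ)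
    (ha : ∀ k ∈ Icc 1 n,
      a k = (A₀ k * ((N : ℝ) ^ 2 - (k : ℝ) ^ 2) - 2 * k * B₁ k + A₂ k) / (N : ℝ) ^ 2 ∧
      b k = (B₀ k * ((N : ℝ) ^ 2 - (k : ℝ) ^ 2) + 2 * k * A₁ k + B₂ k) / (N : ℝ) ^ 2 ∧
      a (N - k) = (-A₀ k * ((k : ℝ) * N + (k : ℝ) ^ 2) - B₁ k * ((N : ℝ) + 2 * k) + A₂ k) /
        (2 * (N : ℝ) ^ 2) ∧
      b (N - k) = (B₀ k * ((k : ℝ) * N + (k : ℝ) ^ 2) - A₁ k * ((N : ℝ) + 2 * k) - B₂ k) /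
        (2 * (N : ℝ) ^ 2) ∧
      a (N + k) = (A₀ k * ((k : ℝ) * N - (k : ℝ) ^ 2) + B₁ k * ((N : ℝ) - 2 * k) + A₂ k) /
        (2 * (N : ℝ) ^ 2) ∧
      b (N + k) = (B₀ k * ((k : ℝ) * N - (k : ℝ) ^ 2) - A₁ k * ((N : ℝ) - 2 * k) + B₂ k) /
        (2 * (N : ℝ) ^ 2))
    (T : ℝ → ℝ)
    (hT : ∀ t : ℝ, T t = A₀ 0 / 2 + ∑ k ∈ Icc 1 n,
      (a k * cos ((k : ℝ) * t) + a (N - k) * cos (((N : ℝ) - k) * t) +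
       a (N + k) * cos (((N : ℝ) + k) * t) +
       b k * sin ((k : ℝ) * t) + b (N - k) * sin (((N : ℝ) - k) * t) +
       b (N + k) * sin (((N : ℝ) + k) * t)))
    (j : ℤ) :
    T (π * (2 * (j : ℝ) - 1) / N) = A₀ 0 / 2 + ∑ k ∈ Icc 1 n,
      (A₀ k * cos ((k : ℝ) * (π * (2 * (j : ℝ) - 1) / N)) +
       B₀ k * sin ((k : ℝ) * (π * (2 * (j : ℝ) - 1) / N))) ∧
    deriv T (π * (2 * (j : ℝ) - 1) / N) = ∑ k ∈ Icc 1 n,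
      (A₁ k * cos ((k : ℝ) * (π * (2 * (j : ℝ) - 1) / N)) +
       B₁ k * sin ((k : ℝ) * (π * (2 * (j : ℝ) - 1) / N))) ∧
    deriv (deriv T) (π * (2 * (j : ℝ) - 1) / N) = ∑ k ∈ Icc 1 n,
      (A₂ k * cos ((k : ℝ) * (π * (2 * (j : ℝ) - 1) / N)) +
       B₂ k * sin ((k : ℝ) * (π * (2 * (j : ℝ) - 1) / N))) := by
  set t₀ : ℝ := π * (2 * (j : ℝ) - 1) / N with ht₀
  have hN0 : (N : ℝ) ≠ 0 := Nat.cast_ne_zero.mpr (by omega)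
  have hN2 : (N : ℝ) ^ 2 ≠ 0 := pow_ne_zero _ hN0
  have hNt : (N : ℝ) * t₀ = (j : ℝ) * (2 * π) - π := by
    rw [ht₀]; field_simp
  have hsin2 : Real.sin ((j : ℝ) * (2 * π)) = 0 := by
    rw [show (j : ℝ) * (2 * π) = ((2 * j : ℤ) : ℝ) * π by push_cast; ring]
    exact Real.sin_int_mul_pi _
  have hcos2 : Real.cos ((j : ℝ) * (2 * π)) = 1 := Real.cos_int_mul_two_pi j
  have hc : Real.cos ((N : ℝ) * t₀) = -1 := by
    rw [hNt, Real.cos_sub, hcos2, hsin2]; simp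
  have hs : Real.sin ((N : ℝ) * t₀) = 0 := by
    rw [hNt, Real.sin_sub, hcos2, hsin2]; simp
  have hcm : ∀ k : ℕ, Real.cos (((N : ℝ) - k) * t₀) = -Real.cos ((k : ℝ) * t₀) := by
    intro k; rw [sub_mul, Real.cos_sub, hc, hs]; ring
  have hcp : ∀ k : ℕ, Real.cos (((N : ℝ) + k) * t₀) = -Real.cos ((k : ℝ) * t₀) := by
    intro k; rw [add_mul, Real.cos_add, hc, hs]; ring
  have hsm : ∀ k : ℕ, Real.sin (((N : ℝ) - k) * t₀) = Real.sin ((k : ℝ) * t₀) := by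
    intro k; rw [sub_mul, Real.sin_sub, hc, hs]; ring
  have hsp : ∀ k : ℕ, Real.sin (((N : ℝ) + k) * t₀) = -Real.sin ((k : ℝ) * t₀) := by
    intro k; rw [add_mul, Real.sin_add, hc, hs]; ring
  have hTfun : T = fun t => A₀ 0 / 2 + ∑ k ∈ Icc 1 n,
      (a k * cos ((k : ℝ) * t) + a (N - k) * cos (((N : ℝ) - k) * t) +
       a (N + k) * cos (((N : ℝ) + k) * t) +
       b k * sin ((k : ℝ) * t) + b (N - k) * sin (((N : ℝ) - k) * t) +
       b (N + k) * sin (((N : ℝ) + k) * t)) := funext hT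
  have hd1 : ∀ t : ℝ, HasDerivAt T (∑ k ∈ Icc 1 n,
      (-(a k * (k : ℝ)) * sin ((k : ℝ) * t) +
       -(a (N - k) * ((N : ℝ) - k)) * sin (((N : ℝ) - k) * t) +
       -(a (N + k) * ((N : ℝ) + k)) * sin (((N : ℝ) + k) * t) +
       (b k * (k : ℝ)) * cos ((k : ℝ) * t) +
       (b (N - k) * ((N : ℝ) - k)) * cos (((N : ℝ) - k) * t) +
       (b (N + k) * ((N : ℝ) + k)) * cos (((N : ℝ) + k) * t))) t := by
    intro t
    rw [hTfun]
    exact (HasDerivAt.fun_sum fun k _ =>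
      (((((hdc' _ _ t).add (hdc' _ _ t)).add (hdc' _ _ t)).add
        (hds' _ _ t)).add (hds' _ _ t)).add (hds' _ _ t)).const_add _
  have hderiv1 : deriv T = fun t => ∑ k ∈ Icc 1 n,
      (-(a k * (k : ℝ)) * sin ((k : ℝ) * t) +
       -(a (N - k) * ((N : ℝ) - k)) * sin (((N : ℝ) - k) * t) +
       -(a (N + k) * ((N : ℝ) + k)) * sin (((N : ℝ) + k) * t) +
       (b k * (k : ℝ)) * cos ((k : ℝ) * t) +
       (b (N - k) * ((N : ℝ) - k)) * cos (((N : ℝ) - k) * t) +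
       (b (N + k) * ((N : ℝ) + k)) * cos (((N : ℝ) + k) * t)) :=
    funext fun t => (hd1 t).deriv
  have hd2 : ∀ t : ℝ, HasDerivAt (deriv T) (∑ k ∈ Icc 1 n,
      ((-(a k * (k : ℝ)) * (k : ℝ)) * cos ((k : ℝ) * t) +
       (-(a (N - k) * ((N : ℝ) - k)) * ((N : ℝ) - k)) * cos (((N : ℝ) - k) * t) +
       (-(a (N + k) * ((N : ℝ) + k)) * ((N : ℝ) + k)) * cos (((N : ℝ) + k) * t) +
       -((b k * (k : ℝ)) * (k : ℝ)) * sin ((k : ℝ) * t) +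
       -((b (N - k) * ((N : ℝ) - k)) * ((N : ℝ) - k)) * sin (((N : ℝ) - k) * t) +
       -((b (N + k) * ((N : ℝ) + k)) * ((N : ℝ) + k)) * sin (((N : ℝ) + k) * t))) t := by
    intro t
    rw [hderiv1]
    exact HasDerivAt.fun_sum fun k _ =>
      (((((hds' _ _ t).add (hds' _ _ t)).add (hds' _ _ t)).add
        (hdc' _ _ t)).add (hdc' _ _ t)).add (hdc' _ _ t)
  refine ⟨?_, ?_, ?_⟩
  · rw [hT t₀]
    refine congrArg _ (Finset.sum_congr rfl fun k hk => ?_)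
    obtain ⟨h1, h2, h3, h4, h5, h6⟩ := ha k hk
    rw [hcm, hcp, hsm, hsp, h1, h2, h3, h4, h5, h6]
    field_simp
    ring
  · rw [(hd1 t₀).deriv]
    refine Finset.sum_congr rfl fun k hk => ?_
    obtain ⟨h1, h2, h3, h4, h5, h6⟩ := ha k hk
    rw [hcm, hcp, hsm, hsp, h1, h2, h3, h4, h5, h6]
    field_simp
    ring
  · rw [show deriv (deriv T) t₀ = _ from (hd2 t₀).deriv]
    refine Finset.sum_congr rfl fun k hk => ?_
    obtain ⟨h1, h2, h3, h4, h5, h6⟩ := ha k hk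
    rw [hcm, hcp, hsm, hsp, h1, h2, h3, h4, h5, h6]
    field_simp
    ring
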